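/- Let X' ⊆ ℝ² be the zonotope X' = { (2 + ε₁ + ε₂, 2 + ε₁ − ε₂) : ε₁ ∈ [−1,1], ε₂ ∈ [−1,1] }. Then the projection of X' onto each coordinate equals the interval [0,4], i.e. { x₁ : (x₁, x₂) ∈ X' } = Set.Icc 0 4 and { x₂ : (x₁, x₂) ∈ X' } = Set.Icc 0 4; moreover the exact range { max x₁ x₂ : (x₁, x₂) ∈ X' } = Set.Icc 1 4 is a strict subset of Set.Icc 0 4. -/
import Mathlib


/-- The zonotope X' = { (2 + ε₁ + ε₂, 2 + ε₁ − ε₂) : ε₁, ε₂ ∈ [−1,1] }. -/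
def Xzono : Set (ℝ × ℝ) :=
  { p | ∃ ε₁ ∈ Set.Icc (-1 : ℝ) 1, ∃ ε₂ ∈ Set.Icc (-1 : ℝ) 1,
      p = (2 + ε₁ + ε₂, 2 + ε₁ - ε₂) }

/-- Projections of X' are [0,4] on each coordinate, and the exact max-pooling
range [1,4] is strictly contained in the box bound [0,4]. -/
theorem box_vs_zonotope_on_maxpool :
    Prod.fst '' Xzono = Set.Icc (0 : ℝ) 4 ∧
    Prod.snd '' Xzono = Set.Icc (0 : ℝ) 4 ∧
    (fun p : ℝ × ℝ => max p.1 p.2) '' Xzono = Set.Icc (1 : ℝ) 4 ∧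
    Set.Icc (1 : ℝ) 4 ⊂ Set.Icc (0 : ℝ) 4 := by
  refine ⟨?_, ?_, ?_, ?_⟩
  · ext x
    constructor
    · rintro ⟨p, ⟨e1, ⟨h1l, h1u⟩, e2, ⟨h2l, h2u⟩, rfl⟩, rfl⟩
      constructor <;> simp <;> linarith
    · rintro ⟨hl, hu⟩
      exact ⟨(x, 2), ⟨(x-2)/2, ⟨by linarith, by linarith⟩,
        (x-2)/2, ⟨by linarith, by linarith⟩, by ext <;> simp <;> ring⟩, rfl⟩
  · ext x
    constructor
    · rintro ⟨p, ⟨e1, ⟨h1l, h1u⟩, e2, ⟨h2l, h2u⟩, rfl⟩, rfl⟩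
      constructor <;> simp <;> linarith
    · rintro ⟨hl, hu⟩
      exact ⟨(2, x), ⟨(x-2)/2, ⟨by linarith, by linarith⟩,
        -((x-2)/2), ⟨by linarith, by linarith⟩, by ext <;> simp <;> ring⟩, rfl⟩
  · ext y
    constructor
    · rintro ⟨p, ⟨e1, ⟨h1l, h1u⟩, e2, ⟨h2l, h2u⟩, rfl⟩, rfl⟩
      simp only
      constructor
      · rcases le_or_gt 0 e2 with h | h
        · exact le_max_of_le_left (by linarith)
        · exact le_max_of_le_right (by linarith)
      · exact max_le (by linarith) (by linarith)
    · rintro ⟨hl, hu⟩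
      rcases le_or_gt y 3 with h | h
      · refine ⟨(y, y), ⟨y - 2, ⟨by linarith, by linarith⟩,
          0, ⟨by norm_num, by norm_num⟩, by ext <;> simp <;> ring⟩, by simp⟩
      · refine ⟨(y, 6 - y), ⟨1, ⟨by norm_num, le_refl 1⟩,
          y - 3, ⟨by linarith, by linarith⟩, by ext <;> simp <;> ring⟩, ?_⟩
        simp only [max_eq_left (by linarith : (6:ℝ) - y ≤ y)]
  · constructor
    · exact Set.Icc_subset_Icc (by norm_num) le_rfl
    · intro h
      have := h (Set.mem_Icc.mpr ⟨le_rfl, by norm_num⟩)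
      exact absurd this.1 (by norm_num)
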